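/- Every prime power pseudoperfect number that is not a power of 2 is a pseudoperfect number. -/

import Mathlib

/-- The map `f` from the paper: `f n = n - 1` if `n` is prime, and otherwise
`f n = n - d n` where `d n = n / n.minFac` is the largest divisor `d` of `n`
with `1 < d < n`. -/
def egf (n : ℕ) : ℕ := if n.Prime then n - 1 else n - n / n.minFac

/-- `F n = {n, f n, f (f n), …, 1}`: the set of iterates of `f` starting at `n`
(the iterates strictly decrease to `1`; we collect all positive iterates). -/
def Fset (n : ℕ) : Set ℕ := {m | 0 < m ∧ ∃ i : ℕ, egf^[i] n = m}

/-- The sum `∑_{p^k ∣ n} 1/p^k` over all prime power divisors `p^k` of `n`. -/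
def ppSum (n : ℕ) : ℚ := ∑ d ∈ n.divisors.filter (fun d => IsPrimePow d), (1 : ℚ) / d

/-- A prime power pseudoperfect number: `n > 1` with `∑_{p^k ∣ n} 1/p^k + 1/n = 1`. -/
def PPPseudoperfect (n : ℕ) : Prop := 1 < n ∧ ppSum n + 1 / n = 1

/-- A prime power Giuga number: a composite `n` with `∑_{p^k ∣ n} 1/p^k - 1/n` a positive integer. -/
def PPGiuga (n : ℕ) : Prop :=
  1 < n ∧ ¬ n.Prime ∧ ∃ m : ℕ, 0 < m ∧ ppSum n - 1 / n = m

/-- A primary pseudoperfect number: `n > 1` with `∑_{p ∣ n} 1/p + 1/n = 1`. -/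
def PrimaryPseudoperfect (n : ℕ) : Prop :=
  1 < n ∧ (∑ p ∈ n.primeFactors, (1 : ℚ) / p) + 1 / n = 1

/-- A Giuga number: a composite `n` with `∑_{p ∣ n} 1/p - 1/n` a positive integer. -/
def Giuga (n : ℕ) : Prop :=
  1 < n ∧ ¬ n.Prime ∧ ∃ m : ℕ, 0 < m ∧ (∑ p ∈ n.primeFactors, (1 : ℚ) / p) - 1 / n = m

/-- A pseudoperfect number: a positive integer that is the sum of a nonempty set of
distinct divisors `d` with `0 < d < n`. -/
def Pseudoperfect (n : ℕ) : Prop :=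
  0 < n ∧ ∃ s : Finset ℕ, s ⊆ n.properDivisors ∧ s.Nonempty ∧ ∑ d ∈ s, d = n

/-- every prime power pseudoperfect number that is not a power of `2`
is a pseudoperfect number. -/
lemma keysum (n : ℕ) (h : PPPseudoperfect n) :
    ∑ d ∈ n.divisors.filter (fun d => IsPrimePow d), n / d = n - 1 := by
  obtain ⟨h1, heq⟩ := h
  have hn0 : n ≠ 0 := by omega
  have hcast : ((∑ d ∈ n.divisors.filter (fun d => IsPrimePow d), n / d : ℕ) : ℚ)
      = n * ppSum n := by
    rw [Nat.cast_sum, ppSum, Finset.mul_sum]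
    refine Finset.sum_congr rfl ?_
    intro d hd
    rw [Finset.mem_filter, Nat.mem_divisors] at hd
    have hd0 : (d : ℚ) ≠ 0 := by
      exact_mod_cast hd.2.ne_zero
    rw [Nat.cast_div hd.1.1 hd0]
    field_simp
  have h2 : ((∑ d ∈ n.divisors.filter (fun d => IsPrimePow d), n / d : ℕ) : ℚ)
      = ((n - 1 : ℕ) : ℚ) := by
    rw [hcast]
    have : ppSum n = 1 - 1 / n := by linarith
    rw [this]
    have hn0' : (n : ℚ) ≠ 0 := by exact_mod_cast hn0
    push_cast [Nat.cast_sub (by omega : 1 ≤ n)]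
    field_simp
  exact_mod_cast h2

lemma pow2 (n : ℕ) (h : PPPseudoperfect n) (hpp : IsPrimePow n) : ∃ k : ℕ, n = 2 ^ k := by
  obtain ⟨p, k, hp, hk, rfl⟩ := hpp
  rw [← Nat.prime_iff] at hp
  set S := (p ^ k).divisors.filter (fun d => IsPrimePow d) with hS
  have hself : p ^ k ∈ S := by
    rw [hS, Finset.mem_filter, Nat.mem_divisors]
    exact ⟨⟨dvd_rfl, pow_ne_zero _ hp.ne_zero⟩, ⟨p, k, hp.prime, hk, rfl⟩⟩
  have hsum := keysum _ h
  rw [← Finset.add_sum_erase _ _ hself, Nat.div_self (pow_pos hp.pos k)] at hsum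
  have h1 : 1 < p ^ k := h.1
  have herase : ∑ d ∈ S.erase (p ^ k), p ^ k / d = p ^ k - 2 := by omega
  have hdvd : p ∣ ∑ d ∈ S.erase (p ^ k), p ^ k / d := by
    refine Finset.dvd_sum ?_
    intro d hd
    rw [Finset.mem_erase, hS, Finset.mem_filter, Nat.mem_divisors] at hd
    obtain ⟨hne, ⟨hddvd, -⟩, q, m, hq, hm, rfl⟩ := hd
    have hqp : q = p := by
      have := hq.nat_prime.dvd_of_dvd_pow (dvd_trans (dvd_pow_self q hm.ne') hddvd)
      exact ((Nat.prime_dvd_prime_iff_eq hq.nat_prime hp).mp this)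
    subst hqp
    have hmk : m ≤ k := (Nat.pow_dvd_pow_iff_le_right hp.one_lt).mp hddvd
    have hmk' : m < k := lt_of_le_of_ne hmk (fun hh => hne (by rw [hh]))
    rw [Nat.pow_div hmk hp.pos]
    exact dvd_pow_self _ (by omega)
  rw [herase] at hdvd
  have hp2 : p ∣ 2 := by
    have := Nat.dvd_sub (dvd_pow_self p hk.ne') hdvd
    rwa [show p ^ k - (p ^ k - 2) = 2 by omega] at this
  have hpe : p = 2 := (Nat.prime_dvd_prime_iff_eq hp Nat.prime_two).mp hp2
  exact ⟨k, by rw [hpe]⟩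

theorem stmt13 (n : ℕ) (h : PPPseudoperfect n) (h2 : ¬ ∃ k : ℕ, n = 2 ^ k) :
    Pseudoperfect n := by
  have h1 : 1 < n := h.1
  have hnp : ¬ IsPrimePow n := fun hpp => h2 (pow2 n h hpp)
  set S := n.divisors.filter (fun d => IsPrimePow d) with hS
  have hmemS : ∀ d ∈ S, d ∣ n ∧ 1 < d ∧ d ≠ n := by
    intro d hd
    rw [hS, Finset.mem_filter, Nat.mem_divisors] at hd
    exact ⟨hd.1.1, hd.2.one_lt, fun hh => hnp (hh ▸ hd.2)⟩
  refine ⟨by omega, insert 1 (S.image (fun d => n / d)), ?_, ⟨1, Finset.mem_insert_self _ _⟩, ?_⟩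
  · intro x hx
    rw [Finset.mem_insert] at hx
    rcases hx with rfl | hx
    · exact Nat.one_mem_properDivisors_iff_one_lt.mpr h1
    · obtain ⟨d, hd, rfl⟩ := Finset.mem_image.mp hx
      obtain ⟨hdvd, hd1, -⟩ := hmemS d hd
      exact Nat.mem_properDivisors.mpr ⟨Nat.div_dvd_of_dvd hdvd,
        Nat.div_lt_self (by omega) hd1⟩
  · have hnotmem : (1 : ℕ) ∉ S.image (fun d => n / d) := by
      intro hmem
      obtain ⟨d, hd, hd1⟩ := Finset.mem_image.mp hmem
      obtain ⟨hdvd, hlt, hne⟩ := hmemS d hd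
      have : d = n := by
        have := Nat.div_mul_cancel hdvd
        have hdln : d ≤ n := Nat.le_of_dvd (by omega) hdvd
        nlinarith [this, hd1]
      exact hne this
    rw [Finset.sum_insert hnotmem, Finset.sum_image ?inj]
    case inj =>
      intro x hx y hy hxy
      have hxd := (hmemS x hx).1
      have hyd := (hmemS y hy).1
      have := Nat.div_div_self hxd (by omega)
      rw [show n / x = n / y from hxy, Nat.div_div_self hyd (by omega)] at this
      exact this.symm
    rw [keysum n h]
    omega
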